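/- Let F be a finite field with exactly q elements and let n, s be natural numbers with s+1 ≤ n ≤ char(F). Then the KT graph is right-regular with right degree q^{n−(s+1)}: for every y ∈ F and every z : Fin (s+1) → F, the number of polynomials f ∈ F[X] with deg f < n satisfying f^{(j)}(y) = z j for all 0 ≤ j ≤ s is exactly q^{n−(s+1)}. -/

import Mathlib

open Polynomial

private lemma degree_taylor_aux {F : Type*} [Field F] (r : F) (f : F[X]) :
    degree (taylor r f) = degree f := by
  rcases eq_or_ne f 0 with rfl | hf
  · simp
  · have h2 : taylor r f ≠ 0 := fun h => hf (taylor_injective r (by simpa using h))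
    rw [degree_eq_natDegree hf, degree_eq_natDegree h2, natDegree_taylor]

private lemma iter_deriv_eval {F : Type*} [Field F] (y : F) (f : F[X]) (j : ℕ) :
    (derivative^[j] f).eval y = (j.factorial : F) * (taylor y f).coeff j := by
  rw [taylor_coeff, ← Polynomial.factorial_smul_hasseDeriv]
  simp [Pi.smul_apply, nsmul_eq_mul]

/-- The KT graph is right-regular with right degree `q ^ (n - (s + 1))`. -/
theorem stmt_2 {F : Type*} [Field F] [Fintype F] (q n s : ℕ)
    (hq : Fintype.card F = q) (hsn : s + 1 ≤ n) (hchar : n ≤ ringChar F)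
    (y : F) (z : Fin (s + 1) → F) :
    Set.ncard {f : F[X] | f.degree < n ∧
        ∀ j : Fin (s + 1), (Polynomial.derivative^[(j : ℕ)] f).eval y = z j} =
      q ^ (n - (s + 1)) := by
  classical
  set m := n - (s + 1) with hm
  -- factorials are nonzero
  have hp : (ringChar F).Prime := CharP.char_is_prime F (ringChar F)
  have hfac : ∀ j : ℕ, j < s + 1 → (j.factorial : F) ≠ 0 := by
    intro j hj h
    rw [CharP.cast_eq_zero_iff F (ringChar F)] at h
    have := (Nat.Prime.dvd_factorial hp).1 h
    omega
  -- auxiliary data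
  set w : ℕ → F := fun j => if h : j < s + 1 then (j.factorial : F)⁻¹ * z ⟨j, h⟩ else 0 with hw
  set g0 : F[X] := ∑ j ∈ Finset.range (s + 1), monomial j (w j) with hg0
  have hg0coeff : ∀ k : ℕ, g0.coeff k = if k < s + 1 then w k else 0 := by
    intro k
    rw [hg0, finset_sum_coeff]
    simp only [coeff_monomial]
    rw [Finset.sum_ite_eq' (Finset.range (s + 1)) k w]
    simp [Finset.mem_range]
  have hg0deg : g0.degree < (s + 1 : ℕ) := by
    rw [degree_lt_iff_coeff_zero]
    intro k hk
    have hk' : s + 1 ≤ k := by exact_mod_cast hk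
    rw [hg0coeff]
    simp [Nat.not_lt.2 hk']
  -- the set after applying taylor y
  set S' : Set F[X] := {g | g.degree < n ∧ ∀ j : Fin (s + 1), g.coeff j = w j} with hS'
  have himg : taylor y '' {f : F[X] | f.degree < n ∧
      ∀ j : Fin (s + 1), (Polynomial.derivative^[(j : ℕ)] f).eval y = z j} = S' := by
    ext g
    constructor
    · rintro ⟨f, ⟨hdeg, hcond⟩, rfl⟩
      refine ⟨by rwa [degree_taylor_aux], fun j => ?_⟩
      have := hcond j
      rw [iter_deriv_eval] at this
      rw [hw]
      simp only [j.isLt, dif_pos]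
      field_simp [hfac j j.isLt] at this ⊢
      rw [mul_comm] at this
      simpa [mul_comm] using this
    · rintro ⟨hdeg, hcond⟩
      refine ⟨taylor (-y) g, ⟨?_, ?_⟩, by rw [taylor_taylor]; simp⟩
      · rwa [degree_taylor_aux]
      · intro j
        rw [iter_deriv_eval, taylor_taylor]
        simp only [add_neg_cancel, taylor_zero', LinearMap.id_coe, id_eq]
        have := hcond j
        rw [this, hw]
        simp only [j.isLt, dif_pos]
        rw [← mul_assoc, mul_inv_cancel₀ (hfac j j.isLt), one_mul]
  -- S' is image of degreeLT m under h ↦ g0 + X^(s+1) * h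
  set Φ : F[X] → F[X] := fun h => g0 + X ^ (s + 1) * h with hΦ
  have hΦinj : Function.Injective Φ := by
    intro a b hab
    simp only [hΦ, add_right_inj] at hab
    exact mul_left_cancel₀ (pow_ne_zero _ X_ne_zero) hab
  have himg2 : Φ '' {h : F[X] | h.degree < (m : ℕ)} = S' := by
    ext g
    constructor
    · rintro ⟨h, hh, rfl⟩
      simp only [Set.mem_setOf_eq] at hh
      constructor
      · have h1 : (X ^ (s + 1) * h : F[X]).degree < (n : ℕ) := by
          rcases eq_or_ne h 0 with rfl | hne
          · simp only [mul_zero, degree_zero]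
            exact_mod_cast WithBot.bot_lt_coe n
          · rw [degree_mul, degree_X_pow, degree_eq_natDegree hne]
            rw [degree_eq_natDegree hne, Nat.cast_lt] at hh
            exact_mod_cast by omega
        have h2 : g0.degree < (n : ℕ) :=
          lt_of_lt_of_le hg0deg (by exact_mod_cast hsn)
        calc (g0 + X ^ (s + 1) * h).degree ≤ max g0.degree (X ^ (s + 1) * h).degree :=
              degree_add_le _ _
          _ < n := max_lt h2 h1
      · intro j
        simp only [Φ, coeff_add, hg0coeff, j.isLt, if_pos]
        have : (X ^ (s + 1) * h : F[X]).coeff j = 0 := by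
          rw [mul_comm, coeff_mul_X_pow']
          simp [Nat.not_le.2 j.isLt]
        rw [this, add_zero]
    · rintro ⟨hdeg, hcond⟩
      have hdvd : X ^ (s + 1) ∣ g - g0 := by
        rw [X_pow_dvd_iff]
        intro d hd
        rw [coeff_sub, hg0coeff, if_pos hd, hcond ⟨d, hd⟩, sub_self]
      obtain ⟨h, hh⟩ := hdvd
      refine ⟨h, ?_, by simp [hΦ, ← hh]⟩
      simp only [Set.mem_setOf_eq]
      rcases eq_or_ne h 0 with rfl | hne
      · simp only [degree_zero]
        exact_mod_cast WithBot.bot_lt_coe m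
      · have hgg0 : (g - g0).degree < (n : ℕ) := by
          calc (g - g0).degree ≤ max g.degree g0.degree := degree_sub_le _ _
            _ < n := max_lt hdeg (lt_of_lt_of_le hg0deg (by exact_mod_cast hsn))
        rw [hh, degree_mul, degree_X_pow, degree_eq_natDegree hne, ← Nat.cast_add,
          Nat.cast_lt] at hgg0
        rw [degree_eq_natDegree hne, Nat.cast_lt]
        omega
  -- conclude
  rw [← Set.ncard_image_of_injective _ (taylor_injective y), himg, ← himg2,
    Set.ncard_image_of_injective _ hΦinj]
  have : {h : F[X] | h.degree < (m : ℕ)} = (Polynomial.degreeLT F m : Set F[X]) := by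
    ext h; simp [Polynomial.mem_degreeLT]
  rw [this, ← Nat.card_coe_set_eq]
  have := Nat.card_congr (Polynomial.degreeLTEquiv F m).toEquiv
  rw [show ((Polynomial.degreeLT F m : Set F[X]) : Type _) = ↥(Polynomial.degreeLT F m) from rfl]
  rw [this, Nat.card_eq_fintype_card, Fintype.card_fun]
  simp [hq]
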